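/- Under the Pell equation T² − 1 = H·U² with H of degree 4 having four pairwise distinct roots, and T'(z) = n(z − z*)U(z): if z* is a zero of H, then z* is a simple zero of U. -/

import Mathlib

open Polynomial

lemma multH_aux (b c d x : ℂ) (hb : x ≠ b) (hc : x ≠ c) (hd : x ≠ d) :
    ((X - C x) * ((X - C b) * (X - C c) * (X - C d))).rootMultiplicity x = 1 := by
  have h1 : (X - C b : Polynomial ℂ) ≠ 0 := X_sub_C_ne_zero b
  have h2 : (X - C c : Polynomial ℂ) ≠ 0 := X_sub_C_ne_zero c
  have h3 : (X - C d : Polynomial ℂ) ≠ 0 := X_sub_C_ne_zero d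
  have h0 : (X - C x : Polynomial ℂ) ≠ 0 := X_sub_C_ne_zero x
  rw [rootMultiplicity_mul (mul_ne_zero h0 (mul_ne_zero (mul_ne_zero h1 h2) h3)),
    rootMultiplicity_mul (mul_ne_zero (mul_ne_zero h1 h2) h3),
    rootMultiplicity_mul (mul_ne_zero h1 h2), rootMultiplicity_X_sub_C_self,
    rootMultiplicity_eq_zero (by simp [IsRoot, sub_eq_zero, hb]),
    rootMultiplicity_eq_zero (by simp [IsRoot, sub_eq_zero, hc]),
    rootMultiplicity_eq_zero (by simp [IsRoot, sub_eq_zero, hd])]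

theorem zstar_zero_of_H_simple_zero_of_U (T U : Polynomial ℂ) (n : ℕ) (hn : 3 ≤ n)
    (hdeg : T.natDegree = n) (a₁ a₂ a₃ a₄ : ℂ)
    (hdist : a₁ ≠ a₂ ∧ a₁ ≠ a₃ ∧ a₁ ≠ a₄ ∧ a₂ ≠ a₃ ∧ a₂ ≠ a₄ ∧ a₃ ≠ a₄)
    (hU : U.natDegree = n - 2) (hlc : U.leadingCoeff = T.leadingCoeff)
    (hpell : T ^ 2 - 1 = (X - C a₁) * (X - C a₂) * (X - C a₃) * (X - C a₄) * U ^ 2)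
    (zs : ℂ) (hder : derivative T = C (n : ℂ) * (X - C zs) * U) :
    ((X - C a₁) * (X - C a₂) * (X - C a₃) * (X - C a₄)).IsRoot zs → U.rootMultiplicity zs = 1 := by
  intro hroot
  obtain ⟨h12, h13, h14, h23, h24, h34⟩ := hdist
  set H : Polynomial ℂ := (X - C a₁) * (X - C a₂) * (X - C a₃) * (X - C a₄) with hHdef
  have hT0 : T ≠ 0 := by
    intro h; rw [h, natDegree_zero] at hdeg; omega
  have hU0 : U ≠ 0 := by
    intro h
    rw [h, leadingCoeff_zero] at hlc
    exact hT0 (leadingCoeff_eq_zero.mp hlc.symm)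
  have hH0 : H ≠ 0 := by
    exact mul_ne_zero (mul_ne_zero (mul_ne_zero (X_sub_C_ne_zero a₁) (X_sub_C_ne_zero a₂))
      (X_sub_C_ne_zero a₃)) (X_sub_C_ne_zero a₄)
  -- T(zs)^2 = 1
  have hev : (T.eval zs) ^ 2 - 1 = 0 := by
    have := congrArg (eval zs) hpell
    simpa [hroot.eq_zero] using this
  set ε : ℂ := T.eval zs with hεdef
  have hε2 : ε ^ 2 = 1 := by linear_combination hev
  have hε0 : ε ≠ 0 := by
    intro h; rw [h] at hε2; simp at hε2
  -- P := T - C ε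
  set P : Polynomial ℂ := T - C ε with hPdef
  have hP0 : P ≠ 0 := by
    intro h
    have : T = C ε := by rw [hPdef] at h; linear_combination h
    rw [this, natDegree_C] at hdeg; omega
  have hQ0 : T + C ε ≠ 0 := by
    intro h
    have : T = C (-ε) := by rw [map_neg]; linear_combination h
    rw [this, natDegree_C] at hdeg; omega
  have hProot : P.IsRoot zs := by simp [hPdef, IsRoot, hεdef]
  set m := U.rootMultiplicity zs with hm
  -- multiplicity of H at zs is 1
  have hHmult : H.rootMultiplicity zs = 1 := by
    have h0 : (zs - a₁) * (zs - a₂) * (zs - a₃) * (zs - a₄) = 0 := by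
      simpa [hHdef, IsRoot] using hroot
    have : zs = a₁ ∨ zs = a₂ ∨ zs = a₃ ∨ zs = a₄ := by
      rcases mul_eq_zero.mp h0 with h | h
      · rcases mul_eq_zero.mp h with h | h
        · rcases mul_eq_zero.mp h with h | h
          · exact Or.inl (sub_eq_zero.mp h)
          · exact Or.inr (Or.inl (sub_eq_zero.mp h))
        · exact Or.inr (Or.inr (Or.inl (sub_eq_zero.mp h)))
      · exact Or.inr (Or.inr (Or.inr (sub_eq_zero.mp h)))
    rcases this with h | h | h | h
    · subst h
      have hre : H = (X - C zs) * ((X - C a₂) * (X - C a₃) * (X - C a₄)) := by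
        rw [hHdef]; ring
      rw [hre]; exact multH_aux a₂ a₃ a₄ zs h12 h13 h14
    · subst h
      have hre : H = (X - C zs) * ((X - C a₁) * (X - C a₃) * (X - C a₄)) := by
        rw [hHdef]; ring
      rw [hre]; exact multH_aux a₁ a₃ a₄ zs (Ne.symm h12) h23 h24
    · subst h
      have hre : H = (X - C zs) * ((X - C a₁) * (X - C a₂) * (X - C a₄)) := by
        rw [hHdef]; ring
      rw [hre]; exact multH_aux a₁ a₂ a₄ zs (Ne.symm h13) (Ne.symm h23) h34
    · subst h
      have hre : H = (X - C zs) * ((X - C a₁) * (X - C a₂) * (X - C a₃)) := by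
        rw [hHdef]; ring
      rw [hre]; exact multH_aux a₁ a₂ a₃ zs (Ne.symm h14) (Ne.symm h24) (Ne.symm h34)
  -- factorization (T - Cε)(T + Cε) = H * U^2
  have hfac : P * (T + C ε) = H * U ^ 2 := by
    rw [hPdef, ← hpell]
    have : (C ε : Polynomial ℂ) ^ 2 = 1 := by
      rw [← map_pow, hε2, map_one]
    linear_combination (-1 : Polynomial ℂ) * this
  -- multiplicity of T + C ε at zs is 0
  have hQmult : (T + C ε).rootMultiplicity zs = 0 :=
    rootMultiplicity_eq_zero (by
      simp only [IsRoot, eval_add, eval_C, ← hεdef]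
      intro h
      exact hε0 (by linear_combination h / 2))
  -- k = 1 + 2m
  have hk : P.rootMultiplicity zs = 1 + 2 * m := by
    have e1 : (P * (T + C ε)).rootMultiplicity zs = (H * U ^ 2).rootMultiplicity zs := by
      rw [hfac]
    rw [rootMultiplicity_mul (mul_ne_zero hP0 hQ0), hQmult,
      rootMultiplicity_mul (mul_ne_zero hH0 (pow_ne_zero 2 hU0)), hHmult,
      sq, rootMultiplicity_mul (mul_ne_zero hU0 hU0)] at e1
    omega
  -- derivative multiplicity
  have hderP : derivative P = C (n : ℂ) * (X - C zs) * U := by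
    rw [hPdef, derivative_sub, derivative_C, sub_zero, hder]
  have hn0 : (n : ℂ) ≠ 0 := Nat.cast_ne_zero.mpr (by omega)
  have hdm : (derivative P).rootMultiplicity zs = 1 + m := by
    rw [hderP, rootMultiplicity_mul (mul_ne_zero (mul_ne_zero (by simpa using hn0)
      (X_sub_C_ne_zero zs)) hU0),
      rootMultiplicity_mul (mul_ne_zero (by simpa using hn0) (X_sub_C_ne_zero zs)),
      rootMultiplicity_eq_zero (by simp [IsRoot, hn0]), rootMultiplicity_X_sub_C_self]
  have := derivative_rootMultiplicity_of_root hProot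
  rw [hdm, hk] at this
  omega
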